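/- Let f be a non-negative multiplicative function satisfying ∑_p ∑_{ν≥2} f(p^ν) log(p^ν)/p^ν ≤ B for some B > 0. Then for x > 1, ∑_{n ≤ x} f(n)/n ≤ exp(B + ∑_{p ≤ x} f(p)/p). -/
import Mathlib
set_option maxHeartbeats 1000000


open Finset

/-- If `f` is a non-negative multiplicative function with
`∑_p ∑_{ν ≥ 2} f(p^ν) log(p^ν) / p^ν ≤ B`, then for `x > 1`,
`∑_{n ≤ x} f(n)/n ≤ exp(B + ∑_{p ≤ x} f(p)/p)`. -/
theorem stmt_7 (f : ℕ → ℝ) (hf1 : f 1 = 1)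
    (hmul : ∀ m n : ℕ, Nat.Coprime m n → f (m * n) = f m * f n)
    (hnonneg : ∀ n, 0 ≤ f n) (B : ℝ) (hB : 0 < B)
    (h2 : ∀ P K : ℕ,
      ∑ p ∈ (Finset.range P).filter Nat.Prime,
        ∑ ν ∈ Finset.Icc 2 K, f (p ^ ν) * Real.log ((p : ℝ) ^ ν) / (p : ℝ) ^ ν ≤ B)
    (x : ℝ) (hx : 1 < x) :
    ∑ n ∈ Finset.Icc 1 ⌊x⌋₊, f n / n ≤
      Real.exp (B + ∑ p ∈ (Finset.range (⌊x⌋₊ + 1)).filter Nat.Prime, f p / p) := by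
  classical
  set N := ⌊x⌋₊ with hNdef
  have hN : 1 ≤ N := Nat.le_floor (by exact_mod_cast hx.le)
  set s := (Finset.range (N + 1)).filter Nat.Prime with hs
  set g : ℕ → ℝ := fun n => f n / n with hg
  have hg1 : g 1 = 1 := by simp [hg, hf1]
  have hgnn : ∀ n, 0 ≤ g n := fun n => div_nonneg (hnonneg n) (Nat.cast_nonneg n)
  have hgmul : ∀ m n : ℕ, Nat.Coprime m n → g (m * n) = g m * g n := by
    intro m n h
    simp only [hg, hmul m n h, Nat.cast_mul]
    ring
  -- Step A : sum ≤ truncated Euler product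
  have key1 : ∑ n ∈ Finset.Icc 1 N, g n ≤
      ∏ p ∈ s, ∑ ν ∈ Finset.range (N + 1), g (p ^ ν) := by
    have hprod : ∏ p ∈ s, ∑ ν ∈ Finset.range (N + 1), g (p ^ ν)
        = ∑ e ∈ Fintype.piFinset (fun _ : {p // p ∈ s} => Finset.range (N + 1)),
            ∏ i : {p // p ∈ s}, g ((i : ℕ) ^ e i) := by
      rw [← Finset.prod_coe_sort s (fun p => ∑ ν ∈ Finset.range (N + 1), g (p ^ ν))]
      exact Finset.prod_univ_sum _ _
    set T : ℕ → ({p // p ∈ s} → ℕ) := fun n i => n.factorization (i : ℕ) with hT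
    have hval : ∀ n ∈ Finset.Icc 1 N, ∏ i : {p // p ∈ s}, g ((i : ℕ) ^ T n i) = g n := by
      intro n hn
      obtain ⟨h1, h2'⟩ := Finset.mem_Icc.mp hn
      have hn0 : n ≠ 0 := by omega
      have hsub : n.factorization.support ⊆ s := by
        intro p hp
        rw [Nat.support_factorization] at hp
        have hpp : p.Prime := Nat.prime_of_mem_primeFactors hp
        have hpd : p ∣ n := Nat.dvd_of_mem_primeFactors hp
        have : p ≤ n := Nat.le_of_dvd (by omega) hpd
        simp only [hs, Finset.mem_filter, Finset.mem_range]
        exact ⟨by omega, hpp⟩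
      rw [Finset.prod_coe_sort s (fun p => g (p ^ n.factorization p)),
        Nat.multiplicative_factorization g hgmul hg1 hn0,
        Finsupp.prod_of_support_subset _ hsub _ (fun i _ => by simpa using hg1)]
    have hinj : ∀ a ∈ Finset.Icc 1 N, ∀ b ∈ Finset.Icc 1 N, T a = T b → a = b := by
      intro a ha b hb hab
      obtain ⟨ha1, ha2⟩ := Finset.mem_Icc.mp ha
      obtain ⟨hb1, hb2⟩ := Finset.mem_Icc.mp hb
      have hfeq : a.factorization = b.factorization := by
        ext p
        by_cases hp : p.Prime
        · by_cases hple : p < N + 1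
          · exact congrFun hab ⟨p, by simp [hs, Finset.mem_filter, Finset.mem_range, hple, hp]⟩
          · rw [Nat.factorization_eq_zero_of_lt (by omega),
              Nat.factorization_eq_zero_of_lt (show b < p by omega)]
        · rw [Nat.factorization_eq_zero_of_not_prime _ hp,
            Nat.factorization_eq_zero_of_not_prime _ hp]
      exact Nat.factorization_inj (by simp; omega) (by simp; omega) hfeq
    have hmem : ∀ n ∈ Finset.Icc 1 N,
        T n ∈ Fintype.piFinset (fun _ : {p // p ∈ s} => Finset.range (N + 1)) := by
      intro n hn
      obtain ⟨h1, h2'⟩ := Finset.mem_Icc.mp hn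
      simp only [Fintype.mem_piFinset, hT, Finset.mem_range]
      intro i
      have := Nat.factorization_lt (n := n) (i : ℕ) (by omega)
      omega
    calc ∑ n ∈ Finset.Icc 1 N, g n
        = ∑ n ∈ Finset.Icc 1 N, ∏ i : {p // p ∈ s}, g ((i : ℕ) ^ T n i) :=
          (Finset.sum_congr rfl hval).symm
      _ = ∑ e ∈ (Finset.Icc 1 N).image T, ∏ i : {p // p ∈ s}, g ((i : ℕ) ^ e i) :=
          (Finset.sum_image (f := fun e => ∏ i : {p // p ∈ s}, g ((i : ℕ) ^ e i)) hinj).symm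
      _ ≤ ∑ e ∈ Fintype.piFinset (fun _ : {p // p ∈ s} => Finset.range (N + 1)),
            ∏ i : {p // p ∈ s}, g ((i : ℕ) ^ e i) := by
          apply Finset.sum_le_sum_of_subset_of_nonneg
          · intro e he
            obtain ⟨n, hn, rfl⟩ := Finset.mem_image.mp he
            exact hmem n hn
          · intro e _ _
            exact Finset.prod_nonneg fun i _ => hgnn _
      _ = ∏ p ∈ s, ∑ ν ∈ Finset.range (N + 1), g (p ^ ν) := hprod.symm
  -- Step B : product ≤ exponential
  have key2 : ∏ p ∈ s, ∑ ν ∈ Finset.range (N + 1), g (p ^ ν) ≤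
      Real.exp (B + ∑ p ∈ s, f p / p) := by
    have hterm : ∀ p ∈ s, ∑ ν ∈ Finset.range (N + 1), g (p ^ ν) ≤
        Real.exp (f p / p +
          ∑ ν ∈ Finset.Icc 2 N, f (p ^ ν) * Real.log ((p : ℝ) ^ ν) / (p : ℝ) ^ ν) := by
      intro p hp
      have hp' : p.Prime := (Finset.mem_filter.mp hp).2
      have hp2 : 2 ≤ p := hp'.two_le
      have hsplit : ∑ ν ∈ Finset.range (N + 1), g (p ^ ν)
          = 1 + (f p / p + ∑ ν ∈ Finset.Icc 2 N, g (p ^ ν)) := by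
        rw [Finset.range_eq_Ico, ← Finset.sum_Ico_consecutive _ (by omega : 0 ≤ 2)
          (by omega : 2 ≤ N + 1)]
        have h01 : ∑ ν ∈ Finset.Ico 0 2, g (p ^ ν) = 1 + f p / p := by
          have : Finset.Ico 0 2 = ({0, 1} : Finset ℕ) := by decide
          rw [this]
          simp [hg, hf1]
        rw [h01, Finset.Ico_add_one_right_eq_Icc]
        ring
      have hbound : ∑ ν ∈ Finset.Icc 2 N, g (p ^ ν) ≤
          ∑ ν ∈ Finset.Icc 2 N, f (p ^ ν) * Real.log ((p : ℝ) ^ ν) / (p : ℝ) ^ ν := by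
        apply Finset.sum_le_sum
        intro ν hν
        obtain ⟨hν2, _⟩ := Finset.mem_Icc.mp hν
        have hppos : (0 : ℝ) < (p : ℝ) ^ ν := by positivity
        have hlog : 1 ≤ Real.log ((p : ℝ) ^ ν) := by
          rw [Real.log_pow]
          have h2le : Real.log 2 ≤ Real.log p := by
            apply Real.log_le_log (by norm_num)
            exact_mod_cast hp2
          have hl2 := Real.log_two_gt_d9
          have hνr : (2 : ℝ) ≤ (ν : ℝ) := by exact_mod_cast hν2
          nlinarith
        have hcast : g (p ^ ν) = f (p ^ ν) / (p : ℝ) ^ ν := by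
          simp [hg]
        rw [hcast]
        gcongr
        exact le_mul_of_one_le_right (hnonneg _) hlog
      rw [hsplit]
      have h1e := Real.add_one_le_exp (f p / p + ∑ ν ∈ Finset.Icc 2 N, g (p ^ ν))
      have hmono : Real.exp (f p / p + ∑ ν ∈ Finset.Icc 2 N, g (p ^ ν)) ≤
          Real.exp (f p / p +
            ∑ ν ∈ Finset.Icc 2 N, f (p ^ ν) * Real.log ((p : ℝ) ^ ν) / (p : ℝ) ^ ν) :=
        Real.exp_le_exp.mpr (by linarith)
      linarith
    calc ∏ p ∈ s, ∑ ν ∈ Finset.range (N + 1), g (p ^ ν)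
        ≤ ∏ p ∈ s, Real.exp (f p / p +
            ∑ ν ∈ Finset.Icc 2 N, f (p ^ ν) * Real.log ((p : ℝ) ^ ν) / (p : ℝ) ^ ν) := by
          apply Finset.prod_le_prod
          · intro p _
            exact Finset.sum_nonneg fun ν _ => hgnn _
          · exact hterm
      _ = Real.exp (∑ p ∈ s, (f p / p +
            ∑ ν ∈ Finset.Icc 2 N, f (p ^ ν) * Real.log ((p : ℝ) ^ ν) / (p : ℝ) ^ ν)) :=
          (Real.exp_sum _ _).symm
      _ ≤ Real.exp (B + ∑ p ∈ s, f p / p) := by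
          rw [Real.exp_le_exp, Finset.sum_add_distrib]
          have := h2 (N + 1) N
          rw [← hs] at this
          linarith
  calc ∑ n ∈ Finset.Icc 1 N, f n / n = ∑ n ∈ Finset.Icc 1 N, g n := rfl
    _ ≤ _ := key1.trans key2
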